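/- Let A be a von Neumann algebra on a complex Hilbert space H which is a factor, and let E(A) = {X ∈ A : 0 ≤ X ≤ I} be its set of effects. If φ : E(A) → E(A) is a bijective affine map, then either φ(0) = 0 or φ(0) = I. -/

import Mathlib

open ContinuousLinearMap RCLike

namespace EffectAux

variable {H : Type*} [NormedAddCommGroup H] [InnerProductSpace ℂ H] [CompleteSpace H]

local notation "⟪" x ", " y "⟫" => @inner ℂ _ _ x y

lemma sa_of_nonneg {A : H →L[ℂ] H} (h : 0 ≤ A) : IsSelfAdjoint A :=
  ((ContinuousLinearMap.nonneg_iff_isPositive A).mp h).isSelfAdjoint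

lemma symm_of_nonneg {A : H →L[ℂ] H} (h : 0 ≤ A) : (A : H →ₗ[ℂ] H).IsSymmetric :=
  (ContinuousLinearMap.isSelfAdjoint_iff_isSymmetric).mp (sa_of_nonneg h)

lemma qf_nonneg {A : H →L[ℂ] H} (h : 0 ≤ A) (ξ : H) : 0 ≤ re ⟪A ξ, ξ⟫ :=
  ((ContinuousLinearMap.nonneg_iff_isPositive A).mp h).2 ξ

lemma nonneg_of_qf {A : H →L[ℂ] H} (hsa : IsSelfAdjoint A) (h : ∀ ξ, 0 ≤ re ⟪A ξ, ξ⟫) :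
    0 ≤ A :=
  (ContinuousLinearMap.nonneg_iff_isPositive A).mpr
    ⟨(ContinuousLinearMap.isSelfAdjoint_iff_isSymmetric).mp hsa, h⟩

lemma qf_le {A B : H →L[ℂ] H} (h : A ≤ B) (ξ : H) : re ⟪A ξ, ξ⟫ ≤ re ⟪B ξ, ξ⟫ := by
  rw [ContinuousLinearMap.le_def] at h
  have := h.2 ξ
  have h2 : re ⟪(B - A) ξ, ξ⟫ = re ⟪B ξ, ξ⟫ - re ⟪A ξ, ξ⟫ := by simp [inner_sub_left]
  rw [ContinuousLinearMap.reApplyInnerSelf, h2] at this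
  linarith

lemma sub_nonneg_iff_le {A B : H →L[ℂ] H} : (0:H →L[ℂ] H) ≤ B - A ↔ A ≤ B := by
  rw [ContinuousLinearMap.le_def, ContinuousLinearMap.le_def, sub_zero]

lemma add_nonneg' {A B : H →L[ℂ] H} (hA : 0 ≤ A) (hB : 0 ≤ B) : 0 ≤ A + B := by
  rw [ContinuousLinearMap.nonneg_iff_isPositive] at *
  exact hA.add hB

lemma smul_nonneg' {A : H →L[ℂ] H} (r : ℝ) (hr : 0 ≤ r) (hA : 0 ≤ A) : 0 ≤ (r:ℂ) • A := by
  apply nonneg_of_qf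
  · rw [IsSelfAdjoint, star_smul, (sa_of_nonneg hA).star_eq, Complex.star_def,
      Complex.conj_ofReal]
  · intro ξ
    have e : re ⟪((r:ℂ) • A) ξ, ξ⟫ = r * re ⟪A ξ, ξ⟫ := by
      simp only [ContinuousLinearMap.smul_apply, inner_smul_left, Complex.conj_ofReal,
        RCLike.re_to_complex, Complex.re_ofReal_mul]
    rw [e]
    exact mul_nonneg hr (qf_nonneg hA ξ)

lemma norm_apply_sq_le {A : H →L[ℂ] H} (h0 : 0 ≤ A) (h1 : A ≤ 1) (ξ : H) :
    ‖A ξ‖^2 ≤ re ⟪A ξ, ξ⟫ := by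
  have hs := symm_of_nonneg h0
  have k1 : 0 ≤ re ⟪A (ξ - A ξ), ξ - A ξ⟫ := qf_nonneg h0 _
  have k2 : re ⟪A (A ξ), A ξ⟫ ≤ re ⟪(1 : H →L[ℂ] H) (A ξ), A ξ⟫ := qf_le h1 (A ξ)
  have e0 : ⟪A (A ξ), ξ⟫ = ⟪A ξ, A ξ⟫ := hs.apply_clm (A ξ) ξ
  have e1 : re ⟪A (ξ - A ξ), ξ - A ξ⟫
      = re ⟪A ξ, ξ⟫ - 2 * re ⟪A ξ, A ξ⟫ + re ⟪A (A ξ), A ξ⟫ := by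
    rw [map_sub, inner_sub_left, inner_sub_right, inner_sub_right, e0]
    simp only [map_sub]
    ring
  have e2 : re ⟪(1 : H →L[ℂ] H) (A ξ), A ξ⟫ = ‖A ξ‖^2 := by
    rw [ContinuousLinearMap.one_apply]; exact inner_self_eq_norm_sq _
  have e3 : re ⟪A ξ, A ξ⟫ = ‖A ξ‖^2 := inner_self_eq_norm_sq _
  rw [e2] at k2
  rw [e1, e3] at k1
  linarith

lemma eq_zero_of_qf_zero {A : H →L[ℂ] H} (h0 : 0 ≤ A) (h1 : A ≤ 1)
    (h : ∀ ξ, re ⟪A ξ, ξ⟫ = 0) : A = 0 := by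
  ext ξ
  have h2 := norm_apply_sq_le h0 h1 ξ
  rw [h ξ] at h2
  have : ‖A ξ‖ = 0 := by nlinarith [norm_nonneg (A ξ)]
  simpa using norm_eq_zero.mp this

lemma qf_combo (z : H →L[ℂ] H) (r s : ℝ) (ξ : H) :
    re ⟪((r:ℂ) • z + (s:ℂ) • (1 : H →L[ℂ] H)) ξ, ξ⟫ = r * re ⟪z ξ, ξ⟫ + s * ‖ξ‖^2 := by
  have e : (⟪(ξ:H), ξ⟫).re = ‖ξ‖^2 := by
    rw [show (⟪(ξ:H), ξ⟫).re = re ⟪(ξ:H), ξ⟫ from rfl]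
    exact inner_self_eq_norm_sq ξ
  simp only [ContinuousLinearMap.add_apply, ContinuousLinearMap.smul_apply,
    ContinuousLinearMap.one_apply, inner_add_left, inner_smul_left, Complex.conj_ofReal,
    map_add, RCLike.re_to_complex, Complex.re_ofReal_mul]
  rw [e]

section Block
variable {P c : H →L[ℂ] H} (hPsa : IsSelfAdjoint P) (hidem : P * P = P)
  (hc : P * c * (1 - P) = c)

include hPsa hidem

lemma proj_norm_le (η : H) : ‖P η‖ ≤ ‖η‖ := by
  have hsymm := (ContinuousLinearMap.isSelfAdjoint_iff_isSymmetric).mp hPsa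
  have hPP : P (P η) = P η := by rw [← ContinuousLinearMap.mul_apply, hidem]
  have h1 : ‖P η‖^2 = re ⟪η, P η⟫ := by
    rw [← inner_self_eq_norm_sq (𝕜 := ℂ) (P η), hsymm.apply_clm η (P η), hPP]
  have h2 : re ⟪η, P η⟫ ≤ ‖η‖ * ‖P η‖ := by
    calc re ⟪η, P η⟫ ≤ ‖⟪η, P η⟫‖ := by simpa using re_le_norm (⟪η, P η⟫)
      _ ≤ ‖η‖ * ‖P η‖ := norm_inner_le_norm _ _
  by_cases hp : ‖P η‖ = 0
  · rw [hp]; exact norm_nonneg η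
  · have hp' : 0 < ‖P η‖ := lt_of_le_of_ne (norm_nonneg _) (Ne.symm hp)
    nlinarith
include hc in
lemma qf_formula (a b t : ℝ) (ξ : H) :
    re ⟪((a:ℂ) • P + (b:ℂ) • (1 - P) + (t:ℂ) • (c + star c)) ξ, ξ⟫
      = a * ‖P ξ‖^2 + b * ‖ξ - P ξ‖^2 + 2*t*(re ⟪c ξ, P ξ⟫) := by
  have hsymm := (ContinuousLinearMap.isSelfAdjoint_iff_isSymmetric).mp hPsa
  have hPP : ∀ η : H, P (P η) = P η := fun η => by
    rw [← ContinuousLinearMap.mul_apply, hidem]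
  have hPy : ∀ η : H, P (η - P η) = 0 := fun η => by
    rw [map_sub, hPP, sub_self]
  -- orthogonality
  have horth : ∀ η : H, ⟪P η, η - P η⟫ = 0 := fun η => by
    rw [hsymm.apply_clm η (η - P η), hPy, inner_zero_right]
  -- re ⟪P ξ, ξ⟫ = ‖P ξ‖²
  have hv : ∀ η : H, P η + (η - P η) = η := fun η => by abel
  have e1 : re ⟪P ξ, ξ⟫ = ‖P ξ‖^2 := by
    have : ⟪P ξ, ξ⟫ = ⟪P ξ, P ξ⟫ + ⟪P ξ, ξ - P ξ⟫ := by
      rw [← inner_add_right, hv]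
    rw [this, horth, add_zero]
    exact inner_self_eq_norm_sq _
  have e2 : re ⟪(ξ : H) - P ξ, ξ⟫ = ‖ξ - P ξ‖^2 := by
    have : ⟪ξ - P ξ, ξ⟫ = ⟪ξ - P ξ, P ξ⟫ + ⟪ξ - P ξ, ξ - P ξ⟫ := by
      rw [← inner_add_right, hv]
    have hoth : ⟪ξ - P ξ, P ξ⟫ = 0 := by
      rw [← inner_conj_symm, horth, map_zero]
    rw [this, hoth, zero_add]
    exact inner_self_eq_norm_sq _
  -- c ξ lands in range of P and c kills range of P
  have hcP : ∀ η : H, P (c η) = c η := fun η => by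
    conv_rhs => rw [← hc]
    have : P * (P * c * (1 - P)) = P * c * (1 - P) := by
      rw [← mul_assoc, ← mul_assoc, hidem]
    conv_lhs => rw [← hc]
    rw [← ContinuousLinearMap.mul_apply, this]
  have e3 : re ⟪c ξ, ξ⟫ = re ⟪c ξ, P ξ⟫ := by
    have : ⟪c ξ, ξ⟫ = ⟪c ξ, P ξ⟫ + ⟪c ξ, ξ - P ξ⟫ := by
      rw [← inner_add_right, hv]
    have h4 : ⟪c ξ, ξ - P ξ⟫ = 0 := by
      rw [← hcP ξ, hsymm.apply_clm (c ξ) (ξ - P ξ), hPy, inner_zero_right]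
    rw [this, h4, add_zero]
  have e4 : re ⟪(star c) ξ, ξ⟫ = re ⟪c ξ, ξ⟫ := by
    rw [ContinuousLinearMap.star_eq_adjoint, ContinuousLinearMap.adjoint_inner_left]
    exact inner_re_symm _ _
  have expand : re ⟪((a:ℂ) • P + (b:ℂ) • (1 - P) + (t:ℂ) • (c + star c)) ξ, ξ⟫
      = a * re ⟪P ξ, ξ⟫ + b * re ⟪ξ - P ξ, ξ⟫ + t * (re ⟪c ξ, ξ⟫ + re ⟪(star c) ξ, ξ⟫) := by
    simp only [ContinuousLinearMap.add_apply, ContinuousLinearMap.smul_apply,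
      ContinuousLinearMap.sub_apply, ContinuousLinearMap.one_apply,
      inner_add_left, inner_smul_left, Complex.conj_ofReal, map_add]
    simp only [RCLike.re_to_complex, Complex.re_ofReal_mul, Complex.add_re]
  rw [expand, e4, e3, e1, e2]
  ring


include hc in
omit hidem hc in
lemma block_sa (a b t : ℝ) :
    IsSelfAdjoint ((a:ℂ) • P + (b:ℂ) • (1 - P) + (t:ℂ) • (c + star c)) := by
  rw [IsSelfAdjoint, star_add, star_add, star_smul, star_smul, star_smul, star_sub,
    star_one, hPsa.star_eq, star_add, star_star, Complex.star_def, Complex.conj_ofReal,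
    Complex.conj_ofReal, Complex.conj_ofReal, add_comm (star c) c]

include hc in
lemma block_nonneg (a b t : ℝ) (ha : 0 ≤ a) (hb : 0 ≤ b) (h : t^2*‖c‖^2 ≤ a*b) :
    0 ≤ (a:ℂ) • P + (b:ℂ) • (1 - P) + (t:ℂ) • (c + star c) := by
  apply nonneg_of_qf (block_sa hPsa a b t)
  intro ξ
  rw [qf_formula hPsa hidem hc]
  set X := ‖P ξ‖ with hX
  set Y := ‖ξ - P ξ‖ with hY
  set r := re ⟪c ξ, P ξ⟫ with hr
  have hXn : 0 ≤ X := norm_nonneg _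
  have hYn : 0 ≤ Y := norm_nonneg _
  have hcn : 0 ≤ ‖c‖ := norm_nonneg _
  -- ‖c ξ‖ ≤ ‖c‖ * Y
  have hcy : ‖c ξ‖ ≤ ‖c‖ * Y := by
    have e : c ξ = P (c ((1 - P) ξ)) := by
      conv_lhs => rw [← hc]
      rfl
    calc ‖c ξ‖ = ‖P (c ((1-P) ξ))‖ := by rw [← e]
      _ ≤ ‖c ((1-P) ξ)‖ := proj_norm_le hPsa hidem _
      _ ≤ ‖c‖ * ‖(1-P) ξ‖ := le_opNorm _ _
      _ = ‖c‖ * Y := by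
          have e2 : (1-P) ξ = ξ - P ξ := by simp
          rw [e2, hY]
  have h1 : |r| ≤ ‖c‖ * Y * X := by
    calc |r| ≤ ‖⟪c ξ, P ξ⟫‖ := abs_re_le_norm _
      _ ≤ ‖c ξ‖ * X := norm_inner_le_norm _ _
      _ ≤ ‖c‖ * Y * X := by nlinarith
  -- AM-GM style bound
  set s := |t| * ‖c‖ with hs
  have hsn : 0 ≤ s := mul_nonneg (abs_nonneg t) hcn
  have hs2 : s^2 ≤ a*b := by
    rw [hs, mul_pow, sq_abs]; exact h
  have key : 2*s*(X*Y) ≤ a*X^2 + b*Y^2 := by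
    rcases eq_or_lt_of_le hb with hb0 | hb0
    · have hs0 : s = 0 := by nlinarith
      rw [hs0]
      have : 0 ≤ a*X^2 + b*Y^2 := by positivity
      linarith
    · have cert : 0 ≤ (s*X - b*Y)^2 + (a*b - s^2)*X^2 := by
        have := sub_nonneg.mpr hs2
        positivity
      nlinarith [cert, mul_pos hb0 hb0]
  have h2 : -(2*t*r) ≤ 2*s*(X*Y) := by
    have : |t*r| ≤ s * (Y*X) := by
      rw [abs_mul, hs]
      have := mul_le_mul_of_nonneg_left h1 (abs_nonneg t)
      calc |t| * |r| ≤ |t| * (‖c‖ * Y * X) := this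
        _ = |t| * ‖c‖ * (Y*X) := by ring
    have := neg_abs_le (t*r)
    nlinarith
  linarith

lemma block_idem_one_sub : (1 - P) * (1 - P) = 1 - P := by
  simp only [mul_sub, sub_mul, one_mul, mul_one, hidem]
  abel

include hc in
lemma block_extract (A B : ℝ) (hA : 0 < A) (hB : 0 ≤ B)
    (h : 0 ≤ (A:ℂ) • P + (B:ℂ) • (1 - P) + ((2:ℝ):ℂ) • (c + star c)) :
    4*‖c‖^2 ≤ A*B := by
  have hcP : ∀ η : H, P (c η) = c η := fun η => by
    conv_rhs => rw [← hc]
    have e : P * (P * c * (1 - P)) = P * c * (1 - P) := by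
      rw [← mul_assoc, ← mul_assoc, hidem]
    conv_lhs => rw [← hc, ← ContinuousLinearMap.mul_apply, e]
  have hcc : ∀ η : H, c (c η) = 0 := fun η => by
    have e : c * c = 0 := by
      rw [← hc]
      have : (1 - P) * (P * c * (1-P)) = 0 := by
        have h0 : (1 - P) * P = 0 := by
          simp only [sub_mul, one_mul, hidem]; abel
        rw [← mul_assoc, ← mul_assoc, h0, zero_mul, zero_mul]
      calc P * c * (1-P) * (P * c * (1-P)) = P * c * ((1-P) * (P * c * (1-P))) := by
            rw [mul_assoc]
        _ = 0 := by rw [this, mul_zero]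
    rw [← ContinuousLinearMap.mul_apply, e, ContinuousLinearMap.zero_apply]
  have hcPz : ∀ η : H, c (P η) = 0 := fun η => by
    have e : c * P = 0 := by
      rw [← hc, mul_assoc, mul_assoc]
      have : (1 - P) * P = 0 := by
        simp only [sub_mul, one_mul, hidem]; abel
      rw [this, mul_zero, mul_zero]
    rw [← ContinuousLinearMap.mul_apply, e, ContinuousLinearMap.zero_apply]
  have hPP : ∀ η : H, P (P η) = P η := fun η => by
    rw [← ContinuousLinearMap.mul_apply, hidem]
  have keysq : ∀ ζ : H, 4*‖c ζ‖^2 ≤ A*B*‖ζ‖^2 := by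
    intro ζ
    set ξ : H := (-2:ℂ) • (c ζ) + (A:ℂ) • (ζ - P ζ) with hxi
    have hPξ : P ξ = (-2:ℂ) • (c ζ) := by
      rw [hxi, map_add, map_smul, map_smul, hcP, map_sub, hPP, sub_self, smul_zero, add_zero]
    have hQξ : ξ - P ξ = (A:ℂ) • (ζ - P ζ) := by rw [hPξ, hxi]; abel
    have hcξ : c ξ = (A:ℂ) • (c ζ) := by
      rw [hxi, map_add, map_smul, map_smul, hcc, smul_zero, zero_add, map_sub, hcPz,
        sub_zero]
    have h0 := qf_nonneg h ξ
    rw [qf_formula hPsa hidem hc A B 2 ξ, hQξ, hcξ, hPξ] at h0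
    have e1 : ‖(-2:ℂ) • (c ζ)‖ = 2*‖c ζ‖ := by
      rw [norm_smul]; norm_num
    have e2 : ‖(A:ℂ) • (ζ - P ζ)‖ = A*‖ζ - P ζ‖ := by
      rw [norm_smul, Complex.norm_real, Real.norm_eq_abs, abs_of_pos hA]
    have e3 : re ⟪(A:ℂ) • (c ζ), (-2:ℂ) • (c ζ)⟫ = A * (-2) * ‖c ζ‖^2 := by
      rw [inner_smul_left, inner_smul_right, Complex.conj_ofReal, ← mul_assoc]
      rw [show ((A:ℂ) * -2) = ((A * -2 : ℝ) : ℂ) by push_cast; ring,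
        RCLike.re_to_complex, Complex.re_ofReal_mul, ← RCLike.re_to_complex,
        inner_self_eq_norm_sq (𝕜 := ℂ) (c ζ)]
    rw [e1, e2, e3] at h0
    have hnz : ‖ζ - P ζ‖ ≤ ‖ζ‖ := by
      have := proj_norm_le (P := 1 - P) ((IsSelfAdjoint.one (R := H →L[ℂ] H)).sub hPsa)
        (block_idem_one_sub hPsa hidem) ζ
      simpa using this
    have hABn' : 0 ≤ A*B := mul_nonneg hA.le hB
    have hstep : A*(4*‖c ζ‖^2) ≤ A*(A*B*‖ζ - P ζ‖^2) := by nlinarith [h0]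
    have h5 : 4*‖c ζ‖^2 ≤ A*B*‖ζ - P ζ‖^2 := le_of_mul_le_mul_left hstep hA
    have h6 : A*B*‖ζ - P ζ‖^2 ≤ A*B*‖ζ‖^2 :=
      mul_le_mul_of_nonneg_left (pow_le_pow_left₀ (norm_nonneg _) hnz 2) hABn'
    linarith
  -- convert to operator norm bound
  have hABn : 0 ≤ A*B := mul_nonneg hA.le hB
  have hb : ∀ ζ : H, ‖c ζ‖ ≤ (Real.sqrt (A*B)/2) * ‖ζ‖ := by
    intro ζ
    have h1 := keysq ζ
    have h2 : (2*‖c ζ‖)^2 ≤ (Real.sqrt (A*B) * ‖ζ‖)^2 := by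
      rw [mul_pow, mul_pow, Real.sq_sqrt hABn]
      nlinarith
    have h3 : 0 ≤ 2*‖c ζ‖ := by positivity
    have h4 : 0 ≤ Real.sqrt (A*B) * ‖ζ‖ := by positivity
    nlinarith [h2, h3, h4]
  have hnorm : ‖c‖ ≤ Real.sqrt (A*B)/2 :=
    ContinuousLinearMap.opNorm_le_bound c (by positivity) hb
  have hsq : ‖c‖^2 ≤ (Real.sqrt (A*B)/2)^2 :=
    pow_le_pow_left₀ (norm_nonneg c) hnorm 2
  rw [div_pow, Real.sq_sqrt hABn] at hsq
  linarith
end Block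
end EffectAux
local notation "⟪" x ", " y "⟫" => @inner ℂ _ _ x y

set_option maxHeartbeats 1000000 in
open EffectAux in
/-- A bijective affine map of the effect interval of a factor von Neumann algebra onto itself
sends `0` either to `0` or to the identity. -/
theorem affine_bijection_of_factor_effects_image_of_zero
    {H : Type*} [NormedAddCommGroup H] [InnerProductSpace ℂ H] [CompleteSpace H]
    (𝓐 : VonNeumannAlgebra H)
    (hfactor : ∀ x ∈ 𝓐, (∀ y ∈ 𝓐, x * y = y * x) → ∃ c : ℂ, x = c • (1 : H →L[ℂ] H))
    (E : Set (H →L[ℂ] H)) (hE : E = {x : H →L[ℂ] H | x ∈ 𝓐 ∧ 0 ≤ x ∧ x ≤ 1})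
    (φ : (H →L[ℂ] H) → (H →L[ℂ] H))
    (hbij : Set.BijOn φ E E)
    (haff : ∀ x ∈ E, ∀ y ∈ E, ∀ t : ℝ, t ∈ Set.Icc (0 : ℝ) 1 →
      φ ((t : ℂ) • x + ((1 - t : ℝ) : ℂ) • y) = (t : ℂ) • φ x + ((1 - t : ℝ) : ℂ) • φ y) :
    φ 0 = 0 ∨ φ 0 = 1 := by
  classical
  have hmem : ∀ {x : H →L[ℂ] H}, x ∈ E ↔ x ∈ 𝓐 ∧ 0 ≤ x ∧ x ≤ 1 := by
    intro x; rw [hE]; exact Iff.rfl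
  have hsmulA : ∀ (γ : ℂ) (x : H →L[ℂ] H), x ∈ 𝓐 → γ • x ∈ 𝓐 := fun γ x hx =>
    show γ • x ∈ 𝓐.toStarSubalgebra from SMulMemClass.smul_mem γ hx
  have hzero_le_one : (0 : H →L[ℂ] H) ≤ 1 :=
    (ContinuousLinearMap.nonneg_iff_isPositive _).mpr (by simpa using isPositive_one)
  have h0E : (0 : H →L[ℂ] H) ∈ E := hmem.mpr ⟨zero_mem 𝓐, le_refl _, hzero_le_one⟩
  have h1E : (1 : H →L[ℂ] H) ∈ E := hmem.mpr ⟨one_mem 𝓐, hzero_le_one, le_refl _⟩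
  -- convexity: midpoints
  have hEmid : ∀ a ∈ E, ∀ b ∈ E, ((1/2:ℝ):ℂ) • a + ((1/2:ℝ):ℂ) • b ∈ E := by
    intro a ha b hb
    obtain ⟨haA, ha0, ha1⟩ := hmem.mp ha
    obtain ⟨hbA, hb0, hb1⟩ := hmem.mp hb
    refine hmem.mpr ⟨add_mem (hsmulA _ _ haA) (hsmulA _ _ hbA), ?_, ?_⟩
    · exact add_nonneg' (smul_nonneg' _ (by norm_num) ha0) (smul_nonneg' _ (by norm_num) hb0)
    · rw [← sub_nonneg_iff_le]
      have e : (1 : H →L[ℂ] H) - (((1/2:ℝ):ℂ) • a + ((1/2:ℝ):ℂ) • b)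
          = ((1/2:ℝ):ℂ) • ((1:H →L[ℂ] H) - a) + ((1/2:ℝ):ℂ) • ((1:H →L[ℂ] H) - b) := by
        push_cast; module
      rw [e]
      exact add_nonneg' (smul_nonneg' _ (by norm_num) (sub_nonneg_iff_le.mpr ha1))
        (smul_nonneg' _ (by norm_num) (sub_nonneg_iff_le.mpr hb1))
  have hmid : ∀ a ∈ E, ∀ b ∈ E,
      φ (((1/2:ℝ):ℂ) • a + ((1/2:ℝ):ℂ) • b) = ((1/2:ℝ):ℂ) • φ a + ((1/2:ℝ):ℂ) • φ b := by
    intro a ha b hb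
    have e := haff a ha b hb (1/2) ⟨by norm_num, by norm_num⟩
    rw [show ((1 - (1/2:ℝ) : ℝ) : ℂ) = ((1/2:ℝ):ℂ) by norm_num] at e
    exact e
  -- the key sum lemma
  have hsum : ∀ a ∈ E, ∀ b ∈ E, ∀ p ∈ E, ∀ q ∈ E,
      a + b = p + q → φ a + φ b = φ p + φ q := by
    intro a ha b hb p hp q hq habpq
    have e1 := hmid a ha b hb
    have e2 := hmid p hp q hq
    have e3 : ((1/2:ℝ):ℂ) • a + ((1/2:ℝ):ℂ) • b = ((1/2:ℝ):ℂ) • p + ((1/2:ℝ):ℂ) • q := by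
      rw [← smul_add, ← smul_add, habpq]
    rw [e3, e2] at e1
    have := congrArg (fun z : H →L[ℂ] H => (2:ℂ) • z) e1.symm
    simpa [smul_add, smul_smul, show (2:ℂ) * ((1/2:ℝ):ℂ) = 1 by norm_num] using this
  have hsum' : ∀ a ∈ E, ∀ b ∈ E, ∀ p ∈ E, ∀ q ∈ E,
      φ a + φ b = φ p + φ q → a + b = p + q := by
    intro a ha b hb p hp q hq habpq
    have e1 := hmid a ha b hb
    have e2 := hmid p hp q hq
    have e3 : ((1/2:ℝ):ℂ) • φ a + ((1/2:ℝ):ℂ) • φ b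
        = ((1/2:ℝ):ℂ) • φ p + ((1/2:ℝ):ℂ) • φ q := by
      rw [← smul_add, ← smul_add, habpq]
    rw [← e1, ← e2] at e3
    have e4 := hbij.injOn (hEmid a ha b hb) (hEmid p hp q hq) e3
    have := congrArg (fun z : H →L[ℂ] H => (2:ℂ) • z) e4
    simpa [smul_add, smul_smul, show (2:ℂ) * ((1/2:ℝ):ℂ) = 1 by norm_num] using this
  set P : H →L[ℂ] H := φ 0 with hPdef
  have hPE : P ∈ E := hbij.mapsTo h0E
  obtain ⟨hPA, hP0, hP1⟩ := hmem.mp hPE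
  -- the order-transfer equivalence
  have hiff : ∀ x ∈ E, ∀ y ∈ E, ((y - x) ∈ E ↔ (φ y - φ x + P) ∈ E) := by
    intro x hx y hy
    constructor
    · intro hd
      have e : x + (y - x) = y + 0 := by abel
      have e2 := hsum x hx (y - x) hd y hy 0 h0E e
      have e3 : φ y - φ x + P = φ (y - x) := by
        rw [hPdef, show φ y - φ x + φ 0 = (φ y + φ 0) - φ x from by abel, ← e2]
        abel
      rw [e3]
      exact hbij.mapsTo hd
    · intro hd
      obtain ⟨d, hdE, hφd⟩ := hbij.surjOn hd
      have e2 : φ x + φ d = φ y + φ 0 := by rw [hφd, ← hPdef]; abel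
      have e3 := hsum' x hx d hdE y hy 0 h0E e2
      rw [add_zero] at e3
      have e4 : y - x = d := by rw [← e3]; abel
      rw [e4]; exact hdE
  -- transitivity of the transferred order relation
  have htrans : ∀ u ∈ E, ∀ v ∈ E, ∀ w ∈ E,
      v - u + P ∈ E → w - v + P ∈ E → w - u + P ∈ E := by
    intro u hu v hv w hw h1 h2
    obtain ⟨x, hxE, hφx⟩ := hbij.surjOn hu
    obtain ⟨y, hyE, hφy⟩ := hbij.surjOn hv
    obtain ⟨z, hzE, hφz⟩ := hbij.surjOn hw
    rw [← hφx, ← hφy] at h1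
    rw [← hφy, ← hφz] at h2
    have d1 : y - x ∈ E := (hiff x hxE y hyE).mpr h1
    have d2 : z - y ∈ E := (hiff y hyE z hzE).mpr h2
    have d3 : z - x ∈ E := by
      obtain ⟨hA1, h01, h11⟩ := hmem.mp d1
      obtain ⟨hA2, h02, h12⟩ := hmem.mp d2
      obtain ⟨hAx, h0x, h1x⟩ := hmem.mp hxE
      obtain ⟨hAz, h0z, h1z⟩ := hmem.mp hzE
      refine hmem.mpr ⟨?_, ?_, ?_⟩
      · have := sub_mem hAz hAx; exact this
      · have e : z - x = (z - y) + (y - x) := by abel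
        rw [e]; exact add_nonneg' h02 h01
      · rw [← sub_nonneg_iff_le]
        have e : (1:H →L[ℂ] H) - (z - x) = ((1:H →L[ℂ] H) - z) + x := by abel
        rw [e]
        exact add_nonneg' (sub_nonneg_iff_le.mpr h1z) h0x
    have := (hiff x hxE z hzE).mp d3
    rwa [hφx, hφz] at this
  -- P is idempotent
  have hsymP := (ContinuousLinearMap.isSelfAdjoint_iff_isSymmetric).mp (sa_of_nonneg hP0)
  have hPPle : P * P ≤ P := by
    rw [← sub_nonneg_iff_le]
    apply nonneg_of_qf
    · rw [IsSelfAdjoint, star_sub, (sa_of_nonneg hP0).star_eq, star_mul,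
        (sa_of_nonneg hP0).star_eq]
    · intro ξ
      have e : re ⟪(P - P * P) ξ, ξ⟫ = re ⟪P ξ, ξ⟫ - ‖P ξ‖^2 := by
        have e1 : ⟪(P * P) ξ, ξ⟫ = ⟪P ξ, P ξ⟫ := by
          rw [ContinuousLinearMap.mul_apply]
          exact hsymP.apply_clm (P ξ) ξ
        rw [ContinuousLinearMap.sub_apply, inner_sub_left, map_sub, e1,
          show re ⟪P ξ, P ξ⟫ = ‖P ξ‖^2 from inner_self_eq_norm_sq _]
      rw [e]
      have := norm_apply_sq_le hP0 hP1 ξ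
      linarith
  have hPP0 : (0:H →L[ℂ] H) ≤ P * P := by
    apply nonneg_of_qf
    · rw [IsSelfAdjoint, star_mul, (sa_of_nonneg hP0).star_eq]
    · intro ξ
      have e1 : ⟪(P * P) ξ, ξ⟫ = ⟪P ξ, P ξ⟫ := by
        rw [ContinuousLinearMap.mul_apply]
        exact hsymP.apply_clm (P ξ) ξ
      rw [e1, show re ⟪P ξ, P ξ⟫ = ‖P ξ‖^2 from inner_self_eq_norm_sq _]
      positivity
  have hPPE : P * P ∈ E := hmem.mpr ⟨mul_mem hPA hPA, hPP0, le_trans hPPle hP1⟩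
  have hbE : P + (P - P * P) ∈ E := by
    refine hmem.mpr ⟨?_, ?_, ?_⟩
    · exact add_mem hPA (sub_mem hPA (mul_mem hPA hPA))
    · exact add_nonneg' hP0 (sub_nonneg_iff_le.mpr hPPle)
    · rw [← sub_nonneg_iff_le]
      have e : (1:H →L[ℂ] H) - (P + (P - P * P))
          = ((1:H →L[ℂ] H) - P) * ((1:H →L[ℂ] H) - P) := by noncomm_ring
      rw [e]
      have hsymQ := (ContinuousLinearMap.isSelfAdjoint_iff_isSymmetric).mp
        ((IsSelfAdjoint.one (R := H →L[ℂ] H)).sub (sa_of_nonneg hP0))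
      apply nonneg_of_qf
      · rw [IsSelfAdjoint, star_mul, ((IsSelfAdjoint.one (R := H →L[ℂ] H)).sub
          (sa_of_nonneg hP0)).star_eq]
      · intro ξ
        have e1 : ⟪(((1:H →L[ℂ] H) - P) * ((1:H →L[ℂ] H) - P)) ξ, ξ⟫
            = ⟪((1:H →L[ℂ] H) - P) ξ, ((1:H →L[ℂ] H) - P) ξ⟫ := by
          rw [ContinuousLinearMap.mul_apply]
          exact hsymQ.apply_clm _ ξ
        rw [e1, show re ⟪((1:H →L[ℂ] H) - P) ξ, ((1:H →L[ℂ] H) - P) ξ⟫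
          = ‖((1:H →L[ℂ] H) - P) ξ‖^2 from inner_self_eq_norm_sq _]
        positivity
  have hidem : P * P = P := by
    obtain ⟨a', ha'E, hφa'⟩ := hbij.surjOn hPPE
    obtain ⟨b', hb'E, hφb'⟩ := hbij.surjOn hbE
    have e1 := hmid a' ha'E b' hb'E
    rw [hφa', hφb'] at e1
    have e2 : ((1/2:ℝ):ℂ) • (P * P) + ((1/2:ℝ):ℂ) • (P + (P - P * P)) = P := by
      push_cast; module
    rw [e2] at e1
    have e3 := hbij.injOn (hEmid a' ha'E b' hb'E) h0E (by rw [e1, hPdef])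
    have e4 : a' + b' = 0 := by
      have := congrArg (fun z : H →L[ℂ] H => (2:ℂ) • z) e3
      simpa [smul_add, smul_smul, show (2:ℂ) * ((1/2:ℝ):ℂ) = 1 by norm_num] using this
    obtain ⟨hAa, h0a, h1a⟩ := hmem.mp ha'E
    obtain ⟨hAb, h0b, h1b⟩ := hmem.mp hb'E
    have ha0 : a' = 0 := by
      apply eq_zero_of_qf_zero h0a h1a
      intro ξ
      have k1 := qf_nonneg h0a ξ
      have k2 := qf_nonneg h0b ξ
      have k3 : re ⟪a' ξ, ξ⟫ + re ⟪b' ξ, ξ⟫ = 0 := by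
        have := congrArg (fun A : H →L[ℂ] H => re ⟪A ξ, ξ⟫) e4
        simpa [ContinuousLinearMap.add_apply, inner_add_left] using this
      linarith
    rw [← hφa', ha0, ← hPdef]
  have hPsa := sa_of_nonneg hP0
  -- P commutes with every effect
  have hcommE : ∀ e ∈ E, P * e * (1 - P) = 0 := by
    intro e heE
    obtain ⟨hAe, h0e, h1e⟩ := hmem.mp heE
    by_contra hne
    set c₀ : H →L[ℂ] H := P * e * (1 - P) with hc₀
    set s : ℝ := 1/(100*(‖c₀‖+1)) with hsdef
    have hc₀n : (0:ℝ) ≤ ‖c₀‖ := norm_nonneg _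
    have hspos : 0 < s := by rw [hsdef]; positivity
    set c : H →L[ℂ] H := (s:ℂ) • c₀ with hcdef
    have hcA : c ∈ 𝓐 :=
      hsmulA _ _ (mul_mem (mul_mem hPA hAe) (sub_mem (one_mem 𝓐) hPA))
    have hcne : c ≠ 0 := smul_ne_zero (by exact_mod_cast hspos.ne') hne
    set κ : ℝ := ‖c‖^2 with hκdef
    have hcpos : 0 < ‖c‖ := norm_pos_iff.mpr hcne
    have hκpos : 0 < κ := by rw [hκdef]; positivity
    have hκle : κ ≤ 1/100 := by
      have h1 : ‖c‖ = s * ‖c₀‖ := by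
        rw [hcdef, norm_smul, Complex.norm_real, Real.norm_eq_abs, abs_of_pos hspos]
      have h2 : s * ‖c₀‖ ≤ 1/100 := by
        have e : s * ‖c₀‖ = ‖c₀‖/(100*(‖c₀‖+1)) := by rw [hsdef]; ring
        rw [e, div_le_div_iff₀ (by positivity) (by norm_num)]
        nlinarith
      rw [hκdef, h1]
      nlinarith [mul_nonneg hspos.le hc₀n]
    have hQidem : ((1:H →L[ℂ] H) - P) * ((1:H →L[ℂ] H) - P) = (1:H →L[ℂ] H) - P := by
      simp only [mul_sub, sub_mul, one_mul, mul_one, hidem]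
      abel
    have hc : P * c * (1 - P) = c := by
      rw [hcdef, hc₀, mul_smul_comm, smul_mul_assoc]
      congr 1
      calc P * (P * e * (1-P)) * (1-P) = (P * P) * e * ((1-P) * (1-P)) := by noncomm_ring
        _ = P * e * (1-P) := by rw [hidem, hQidem]
    clear hcdef hc₀ hsdef
    clear_value κ c s c₀
    -- membership helper
    have hMA : ∀ a b t : ℝ, ((a:ℝ):ℂ) • P + ((b:ℝ):ℂ) • ((1:H →L[ℂ] H) - P)
        + ((t:ℝ):ℂ) • (c + star c) ∈ 𝓐 := fun a b t =>
      add_mem (add_mem (hsmulA _ _ hPA) (hsmulA _ _ (sub_mem (one_mem 𝓐) hPA)))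
        (hsmulA _ _ (add_mem hcA (star_mem hcA)))
    have hMsub : ∀ a b t : ℝ, (1:H →L[ℂ] H) - (((a:ℝ):ℂ) • P + ((b:ℝ):ℂ) • ((1:H →L[ℂ] H) - P)
        + ((t:ℝ):ℂ) • (c + star c))
        = (((1-a:ℝ):ℂ) • P + (((1-b:ℝ)):ℂ) • ((1:H →L[ℂ] H) - P)
          + (((-t:ℝ)):ℂ) • (c + star c)) := by
      intro a b t
      push_cast
      module
    have hME : ∀ a b t : ℝ, 0 ≤ a → 0 ≤ b → a ≤ 1 → b ≤ 1 →
        t^2*κ ≤ a*b → t^2*κ ≤ (1-a)*(1-b) →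
        ((a:ℝ):ℂ) • P + ((b:ℝ):ℂ) • ((1:H →L[ℂ] H) - P)
          + ((t:ℝ):ℂ) • (c + star c) ∈ E := by
      intro a b t ha hb ha1 hb1 hab hab'
      rw [hκdef] at hab hab'
      refine hmem.mpr ⟨hMA a b t, ?_, ?_⟩
      · exact block_nonneg hPsa hidem hc a b t ha hb hab
      · rw [← sub_nonneg_iff_le, hMsub a b t]
        exact block_nonneg hPsa hidem hc (1-a) (1-b) (-t) (by linarith) (by linarith)
          (by rw [neg_sq]; exact hab')
    -- the three effects u, v, w and the step effect
    have hu := hME (1/2) (1/4) 0 (by norm_num) (by norm_num) (by norm_num) (by norm_num)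
      (by nlinarith) (by nlinarith)
    have hv := hME (1/2 - 2*κ) (1/4 + 2*κ) 1 (by nlinarith) (by nlinarith) (by nlinarith)
      (by nlinarith) (by nlinarith) (by nlinarith)
    have hw := hME (1/2 - 4*κ) (1/4 + 4*κ) 2 (by nlinarith) (by nlinarith) (by nlinarith)
      (by nlinarith) (by nlinarith) (by nlinarith)
    have hd := hME (1 - 2*κ) (2*κ) 1 (by nlinarith) (by nlinarith) (by nlinarith)
      (by nlinarith) (by nlinarith) (by nlinarith)
    have hid1 : (((1/2 - 2*κ:ℝ):ℂ) • P + ((1/4 + 2*κ:ℝ):ℂ) • ((1:H →L[ℂ] H) - P)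
          + ((1:ℝ):ℂ) • (c + star c))
        - (((1/2:ℝ):ℂ) • P + ((1/4:ℝ):ℂ) • ((1:H →L[ℂ] H) - P)
          + ((0:ℝ):ℂ) • (c + star c)) + P
        = ((1 - 2*κ:ℝ):ℂ) • P + ((2*κ:ℝ):ℂ) • ((1:H →L[ℂ] H) - P)
          + ((1:ℝ):ℂ) • (c + star c) := by
      push_cast; module
    have hid2 : (((1/2 - 4*κ:ℝ):ℂ) • P + ((1/4 + 4*κ:ℝ):ℂ) • ((1:H →L[ℂ] H) - P)
          + ((2:ℝ):ℂ) • (c + star c))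
        - (((1/2 - 2*κ:ℝ):ℂ) • P + ((1/4 + 2*κ:ℝ):ℂ) • ((1:H →L[ℂ] H) - P)
          + ((1:ℝ):ℂ) • (c + star c)) + P
        = ((1 - 2*κ:ℝ):ℂ) • P + ((2*κ:ℝ):ℂ) • ((1:H →L[ℂ] H) - P)
          + ((1:ℝ):ℂ) • (c + star c) := by
      push_cast; module
    have hid3 : (((1/2 - 4*κ:ℝ):ℂ) • P + ((1/4 + 4*κ:ℝ):ℂ) • ((1:H →L[ℂ] H) - P)
          + ((2:ℝ):ℂ) • (c + star c))
        - (((1/2:ℝ):ℂ) • P + ((1/4:ℝ):ℂ) • ((1:H →L[ℂ] H) - P)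
          + ((0:ℝ):ℂ) • (c + star c)) + P
        = ((1 - 4*κ:ℝ):ℂ) • P + ((4*κ:ℝ):ℂ) • ((1:H →L[ℂ] H) - P)
          + ((2:ℝ):ℂ) • (c + star c) := by
      push_cast; module
    have h3 := htrans _ hu _ hv _ hw (by rw [hid1]; exact hd) (by rw [hid2]; exact hd)
    rw [hid3] at h3
    have h0M := (hmem.mp h3).2.1
    have hex := block_extract hPsa hidem hc (1 - 4*κ) (4*κ) (by nlinarith) (by nlinarith) h0M
    rw [← hκdef] at hex
    nlinarith
  -- P commutes with every effect, in multiplicative form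
  have hcomm_mul : ∀ e ∈ E, P * e = e * P := by
    intro e heE
    obtain ⟨hAe, h0e, h1e⟩ := hmem.mp heE
    have h1 := hcommE e heE
    have e1 : P * e = P * e * P := by
      have e : P * e * (1 - P) = P * e - P * e * P := by noncomm_ring
      rw [e] at h1
      exact sub_eq_zero.mp h1
    have h2 : (1 - P) * (e * P) = 0 := by
      have h1' := hcommE e heE
      have := congrArg star h1'
      rw [star_zero] at this
      calc (1 - P) * (e * P) = star (P * e * (1 - P)) := by
            rw [star_mul, star_mul, (sa_of_nonneg h0e).star_eq, hPsa.star_eq,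
              ((IsSelfAdjoint.one (R := H →L[ℂ] H)).sub hPsa).star_eq]
        _ = 0 := this
    have e2 : e * P = P * e * P := by
      have e : (1 - P) * (e * P) = e * P - P * e * P := by noncomm_ring
      rw [e] at h2
      exact sub_eq_zero.mp h2
    rw [e1, e2]
  -- P commutes with every selfadjoint element of the algebra
  have hsa_comm : ∀ z ∈ 𝓐, IsSelfAdjoint z → P * z = z * P := by
    intro z hzA hzsa
    set r : ℝ := 1/(2*(‖z‖+1)) with hrdef
    have hrpos : 0 < r := by rw [hrdef]; positivity
    have hrz : r * ‖z‖ ≤ 1/2 := by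
      have e : r * ‖z‖ = ‖z‖/(2*(‖z‖+1)) := by rw [hrdef]; ring
      rw [e, div_le_div_iff₀ (by positivity) (by norm_num)]
      nlinarith [norm_nonneg z]
    have hbnd : ∀ ξ : H, |re ⟪z ξ, ξ⟫| ≤ ‖z‖ * ‖ξ‖^2 := by
      intro ξ
      calc |re ⟪z ξ, ξ⟫| ≤ ‖⟪z ξ, ξ⟫‖ := abs_re_le_norm _
        _ ≤ ‖z ξ‖ * ‖ξ‖ := norm_inner_le_norm _ _
        _ ≤ ‖z‖ * ‖ξ‖^2 := by nlinarith [le_opNorm z ξ, norm_nonneg ξ, norm_nonneg (z ξ)]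
    have heE : ((r:ℝ):ℂ) • z + ((1/2:ℝ):ℂ) • (1:H →L[ℂ] H) ∈ E := by
      refine hmem.mpr ⟨add_mem (hsmulA _ _ hzA) (hsmulA _ _ (one_mem 𝓐)), ?_, ?_⟩
      · apply nonneg_of_qf
        · rw [IsSelfAdjoint, star_add, star_smul, star_smul, hzsa.star_eq, star_one,
            Complex.star_def, Complex.conj_ofReal, Complex.conj_ofReal]
        · intro ξ
          rw [qf_combo]
          have h1 := hbnd ξ
          nlinarith [mul_le_mul_of_nonneg_right hrz (sq_nonneg ‖ξ‖),
            mul_le_mul_of_nonneg_left h1 hrpos.le, neg_abs_le (re ⟪z ξ, ξ⟫)]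
      · rw [← sub_nonneg_iff_le]
        have e : (1:H →L[ℂ] H) - (((r:ℝ):ℂ) • z + ((1/2:ℝ):ℂ) • (1:H →L[ℂ] H))
            = ((-r:ℝ):ℂ) • z + ((1/2:ℝ):ℂ) • (1:H →L[ℂ] H) := by
          push_cast; module
        rw [e]
        apply nonneg_of_qf
        · rw [IsSelfAdjoint, star_add, star_smul, star_smul, hzsa.star_eq, star_one,
            Complex.star_def, Complex.conj_ofReal, Complex.conj_ofReal]
        · intro ξ
          rw [qf_combo]
          have h1 := hbnd ξ
          nlinarith [mul_le_mul_of_nonneg_right hrz (sq_nonneg ‖ξ‖),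
            mul_le_mul_of_nonneg_left h1 hrpos.le, neg_abs_le (re ⟪z ξ, ξ⟫),
            le_abs_self (re ⟪z ξ, ξ⟫)]
    have hcm := hcomm_mul _ heE
    have e1 : P * (((r:ℝ):ℂ) • z + ((1/2:ℝ):ℂ) • (1:H →L[ℂ] H))
        = ((r:ℝ):ℂ) • (P * z) + ((1/2:ℝ):ℂ) • P := by
      rw [mul_add, mul_smul_comm, mul_smul_comm, mul_one]
    have e2 : (((r:ℝ):ℂ) • z + ((1/2:ℝ):ℂ) • (1:H →L[ℂ] H)) * P
        = ((r:ℝ):ℂ) • (z * P) + ((1/2:ℝ):ℂ) • P := by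
      rw [add_mul, smul_mul_assoc, smul_mul_assoc, one_mul]
    rw [e1, e2] at hcm
    have e3 : ((r:ℝ):ℂ) • (P * z) = ((r:ℝ):ℂ) • (z * P) := by
      exact add_right_cancel hcm
    exact smul_right_injective (H →L[ℂ] H) (by exact_mod_cast hrpos.ne') e3
  -- P commutes with everything in the algebra
  have hcommA : ∀ y ∈ 𝓐, P * y = y * P := by
    intro y hyA
    have hz1 : (y + star y) ∈ 𝓐 := add_mem hyA (star_mem hyA)
    have hz2 : (Complex.I • (y - star y)) ∈ 𝓐 :=
      hsmulA _ _ (sub_mem hyA (star_mem hyA))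
    have hsa1 : IsSelfAdjoint (y + star y) := by
      rw [IsSelfAdjoint, star_add, star_star, add_comm]
    have hsa2 : IsSelfAdjoint (Complex.I • (y - star y)) := by
      rw [IsSelfAdjoint, star_smul, star_sub, star_star, Complex.star_def, Complex.conj_I,
        neg_smul, ← smul_neg, neg_sub]
    have h1 := hsa_comm _ hz1 hsa1
    have h2 := hsa_comm _ hz2 hsa2
    have h2' : P * (y - star y) = (y - star y) * P := by
      rw [mul_smul_comm, smul_mul_assoc] at h2
      exact smul_right_injective (H →L[ℂ] H) Complex.I_ne_zero h2
    have h3 : P * y + P * y = y * P + y * P := by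
      have l1 : P * ((y + star y) + (y - star y)) = ((y + star y) + (y - star y)) * P := by
        rw [mul_add, add_mul, h1, h2']
      have e : (y + star y) + (y - star y) = y + y := by abel
      rw [e, mul_add, add_mul] at l1
      exact l1
    have h4 : (2:ℂ) • (P * y) = (2:ℂ) • (y * P) := by
      rw [two_smul, two_smul]
      exact h3
    exact smul_right_injective (H →L[ℂ] H) two_ne_zero h4
  -- conclude via the factor property
  obtain ⟨γ, hγ⟩ := hfactor P hPA (fun y hy => hcommA y hy)
  by_cases honez : (1 : H →L[ℂ] H) = 0
  · left
    rw [hγ, honez, smul_zero]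
  · have hγγ : γ * γ = γ := by
      have h := hidem
      rw [hγ, smul_mul_smul, mul_one] at h
      have h' : (γ*γ - γ) • (1:H →L[ℂ] H) = 0 := by
        rw [sub_smul, h, sub_self]
      rcases smul_eq_zero.mp h' with h'' | h''
      · linear_combination h''
      · exact absurd h'' honez
    rcases mul_eq_zero.mp (show γ * (γ - 1) = 0 by ring_nf; linear_combination hγγ) with h | h
    · left
      rw [hγ, h, zero_smul]
    · right
      rw [hγ, show γ = 1 from by linear_combination h, one_smul]
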